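/- Let G be a finitely generated LPF group with positive rank gradient, and let A, B be finitely generated subgroups of infinite index in G. Then the profinite measure of the product set satisfies μ(AB) = 0. -/

import Mathlib

open scoped Pointwise

universe u

/-- `d(H)`: the smallest cardinality of a generating set of the subgroup `H`. -/
noncomputable def subgroupRank {G : Type u} [Group G] (H : Subgroup G) : ℕ :=
  sInf {n : ℕ | ∃ S : Finset G, S.card = n ∧ Subgroup.closure (S : Set G) = H}

/-- The rank gradient `∇G = inf (d(U) - 1)/[G : U]` over finite index subgroups `U`. -/
noncomputable def rankGradient (G : Type u) [Group G] : ℝ :=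
  sInf {r : ℝ | ∃ U : Subgroup G, U.FiniteIndex ∧
    r = ((subgroupRank U : ℝ) - 1) / (U.index : ℝ)}

/-- `G` is LERF if every finitely generated subgroup is an intersection of
finite index subgroups. -/
def IsLERF (G : Type u) [Group G] : Prop :=
  ∀ H : Subgroup G, H.FG →
    ∃ 𝒮 : Set (Subgroup G), (∀ U ∈ 𝒮, U.FiniteIndex) ∧ H = sInf 𝒮

/-- `G` is LPF if every finitely generated subgroup of infinite index is contained in
finite index subgroups of arbitrarily large index. -/
def IsLPF (G : Type u) [Group G] : Prop :=
  ∀ H : Subgroup G, H.FG → H.index = 0 →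
    ∀ n : ℕ, ∃ U : Subgroup G, H ≤ U ∧ U.FiniteIndex ∧ n ≤ U.index

/-- An epimorphism from `G` onto a finite group. -/
structure FiniteQuotient (G : Type u) [Group G] where
  K : Type u
  [grp : Group K]
  [fin : Fintype K]
  φ : G →* K
  surj : Function.Surjective φ

attribute [instance] FiniteQuotient.grp FiniteQuotient.fin

/-- The profinite measure `μ(S) = inf |φ(S)|/|φ(G)|` over epimorphisms `φ` from `G`
onto finite groups. -/
noncomputable def profiniteMeasure {G : Type u} [Group G] (S : Set G) : ℝ :=
  sInf {r : ℝ | ∃ q : FiniteQuotient G,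
    r = (Set.ncard (q.φ '' S) : ℝ) / (Fintype.card q.K : ℝ)}

/-- The product set `H₁H₂⋯Hₙ`. -/
def productSet {G : Type u} [Group G] {n : ℕ} (H : Fin n → Subgroup G) : Set G :=
  {g : G | ∃ f : Fin n → G, (∀ i, f i ∈ H i) ∧ g = (List.ofFn f).prod}

section Aux

variable {G : Type u} [Group G]

lemma subgroupRank_le_card {R : Subgroup G} {S : Finset G}
    (h : Subgroup.closure (S : Set G) = R) : subgroupRank R ≤ S.card :=
  Nat.sInf_le ⟨S, rfl, h⟩

lemma rankGradient_le_aux (R : Subgroup G) (hR : R.FiniteIndex) :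
    rankGradient G ≤ ((subgroupRank R : ℝ) - 1) / (R.index : ℝ) := by
  apply csInf_le
  · refine ⟨-1, ?_⟩
    rintro r ⟨U, hU, rfl⟩
    have h1 : (1:ℝ) ≤ (U.index : ℝ) := by
      exact_mod_cast Nat.one_le_iff_ne_zero.mpr hU.index_ne_zero
    have h0 : (0:ℝ) < (U.index : ℝ) := lt_of_lt_of_le one_pos h1
    rw [le_div_iff₀ h0]
    nlinarith [Nat.cast_nonneg (α := ℝ) (subgroupRank U)]
  · exact ⟨R, hR, rfl⟩

lemma exists_finset_closure_inf (A W : Subgroup G) [W.FiniteIndex] {S : Finset G}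
    (hS : Subgroup.closure (S : Set G) = A) :
    ∃ T : Finset G, T.card ≤ W.relIndex A * S.card ∧
      Subgroup.closure (T : Set G) = W ⊓ A := by
  classical
  have hSsub : ∀ x ∈ S, x ∈ A := fun x hx => hS ▸ Subgroup.subset_closure hx
  set S' : Finset A := S.attach.image (fun x => (⟨x.1, hSsub x.1 x.2⟩ : A)) with hS'
  have himg : A.subtype '' (S' : Set A) = (S : Set G) := by
    ext x
    constructor
    · rintro ⟨y, hy, rfl⟩
      rw [Finset.mem_coe, hS', Finset.mem_image] at hy
      obtain ⟨z, hz, rfl⟩ := hy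
      exact z.2
    · intro hx
      exact ⟨⟨x, hSsub x hx⟩,
        Finset.mem_coe.mpr (Finset.mem_image.mpr ⟨⟨x, hx⟩, Finset.mem_attach _ _, rfl⟩), rfl⟩
  have hS'top : Subgroup.closure (S' : Set A) = ⊤ := by
    apply Subgroup.map_injective A.subtype_injective
    rw [MonoidHom.map_closure, himg, hS, ← MonoidHom.range_eq_map, A.range_subtype]
  obtain ⟨T, hTcard, hTtop⟩ := Subgroup.exists_finset_card_le_mul (W.subgroupOf A) hS'top
  set f : (W.subgroupOf A) → G := fun x => A.subtype ((W.subgroupOf A).subtype x) with hf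
  refine ⟨T.image f, ?_, ?_⟩
  · calc (T.image f).card ≤ T.card := Finset.card_image_le
      _ ≤ (W.subgroupOf A).index * S'.card := hTcard
      _ ≤ W.relIndex A * S.card := by
        refine Nat.mul_le_mul le_rfl ?_
        calc S'.card ≤ S.attach.card := Finset.card_image_le
          _ = S.card := Finset.card_attach
  · have hcoe : ((T.image f : Finset G) : Set G)
        = A.subtype '' ((W.subgroupOf A).subtype '' (T : Set (W.subgroupOf A))) := by
      rw [Finset.coe_image, Set.image_image]
    rw [hcoe, ← MonoidHom.map_closure, ← MonoidHom.map_closure, hTtop,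
      ← MonoidHom.range_eq_map, Subgroup.range_subtype, Subgroup.subgroupOf_map_subtype]

lemma exists_cover_left (A W : Subgroup G) (h : W.relIndex A ≠ 0) :
    ∃ F : Finset G, F.card ≤ W.relIndex A ∧
      (A : Set G) ⊆ (F : Set G) * ((W ⊓ A : Subgroup G) : Set G) := by
  classical
  have hfin : Finite (A ⧸ W.subgroupOf A) := Nat.finite_of_card_ne_zero h
  haveI := Fintype.ofFinite (A ⧸ W.subgroupOf A)
  refine ⟨Finset.univ.image (fun q : A ⧸ W.subgroupOf A => ((Quotient.out q : A) : G)), ?_, ?_⟩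
  · calc _ ≤ (Finset.univ : Finset (A ⧸ W.subgroupOf A)).card := Finset.card_image_le
      _ = Fintype.card (A ⧸ W.subgroupOf A) := Finset.card_univ
      _ = W.relIndex A := Nat.card_eq_fintype_card.symm
  · rintro x hx
    obtain ⟨w, hw⟩ := QuotientGroup.mk_out_eq_mul (s := W.subgroupOf A) (⟨x, hx⟩ : A)
    refine ⟨((QuotientGroup.mk (s := W.subgroupOf A) (⟨x, hx⟩ : A)).out : A), ?_, (((w : A)⁻¹ : A) : G), ?_, ?_⟩
    · exact Finset.mem_coe.mpr (Finset.mem_image.mpr ⟨_, Finset.mem_univ _, rfl⟩)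
    · refine SetLike.mem_coe.mpr (Subgroup.mem_inf.mpr ⟨?_, SetLike.coe_mem _⟩)
      exact (Subgroup.inv_mem _ w.2 : ((w : A)⁻¹ : A) ∈ W.subgroupOf A)
    · have : ((⟨x, hx⟩ : A) : G) = (((QuotientGroup.mk (s := W.subgroupOf A) (⟨x, hx⟩ : A)).out : A) : G) * (((w : A)⁻¹ : A) : G) := by
        rw [← Subgroup.coe_mul]
        congr 1
        rw [hw, mul_assoc, mul_inv_cancel, mul_one]
      exact this.symm

lemma exists_cover_right (B W : Subgroup G) (h : W.relIndex B ≠ 0) :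
    ∃ F : Finset G, F.card ≤ W.relIndex B ∧
      (B : Set G) ⊆ ((W ⊓ B : Subgroup G) : Set G) * (F : Set G) := by
  classical
  obtain ⟨F, hc, hcov⟩ := exists_cover_left B W h
  refine ⟨F.image (·⁻¹), le_trans Finset.card_image_le hc, ?_⟩
  intro x hx
  obtain ⟨f, hf, w, hw, hfw⟩ := hcov (show x⁻¹ ∈ (B : Set G) from inv_mem hx)
  refine ⟨w⁻¹, ?_, f⁻¹, ?_, ?_⟩
  · exact SetLike.mem_coe.mpr (Subgroup.inv_mem _ (SetLike.mem_coe.mp hw))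
  · exact Finset.mem_coe.mpr (Finset.mem_image.mpr ⟨f, Finset.mem_coe.mp hf, rfl⟩)
  · have hfw' : f * w = x⁻¹ := hfw
    have : x = (f * w)⁻¹ := by rw [hfw', inv_inv]
    rw [this, mul_inv_rev]

end Aux

set_option maxHeartbeats 1000000 in
theorem stmt_7 {G : Type u} [Group G] (hfg : Group.FG G) (hlpf : IsLPF G)
    (hrg : 0 < rankGradient G) (A B : Subgroup G) (hA : A.FG) (hB : B.FG)
    (hAi : A.index = 0) (hBi : B.index = 0) :
    profiniteMeasure ((A : Set G) * (B : Set G)) = 0 := by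
  classical
  obtain ⟨SA, hSA⟩ := id hA
  obtain ⟨SB, hSB⟩ := id hB
  set ab : ℕ := SA.card + SB.card with hab
  set n₀ : ℕ := ⌈(ab : ℝ) / rankGradient G⌉₊ + 1 with hn₀
  have hn₀pos : 0 < n₀ := Nat.succ_pos _
  have hthresh : (ab : ℝ) / (n₀ : ℝ) < rankGradient G := by
    rw [div_lt_iff₀ (by exact_mod_cast hn₀pos)]
    have h1 : (ab : ℝ) / rankGradient G < (n₀ : ℝ) := by
      have h2 := Nat.le_ceil ((ab : ℝ) / rankGradient G)
      have h3 : ((⌈(ab : ℝ) / rankGradient G⌉₊ : ℝ)) < (n₀ : ℝ) := by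
        exact_mod_cast Nat.lt_succ_self _
      linarith
    have h4 : (ab : ℝ) = ((ab : ℝ) / rankGradient G) * rankGradient G := by
      field_simp
    rw [h4]
    calc ((ab : ℝ) / rankGradient G) * rankGradient G < (n₀ : ℝ) * rankGradient G :=
          mul_lt_mul_of_pos_right h1 hrg
      _ = rankGradient G * (n₀ : ℝ) := mul_comm _ _
  obtain ⟨U, hAU, hUfi, hUn⟩ := hlpf A hA hAi n₀
  obtain ⟨V, hBV, hVfi, hVm⟩ := hlpf B hB hBi n₀
  haveI := hUfi
  haveI := hVfi
  set W : Subgroup G := U ⊓ V with hW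
  haveI hWfi : W.FiniteIndex := inferInstance
  set k : ℕ := W.relIndex A with hk
  set j : ℕ := W.relIndex B with hj
  have hk0 : k ≠ 0 := (Subgroup.instFiniteIndex_subgroupOf W A).index_ne_zero
  have hj0 : j ≠ 0 := (Subgroup.instFiniteIndex_subgroupOf W B).index_ne_zero
  have hWU : W ≤ U := inf_le_left
  have hWV : W ≤ V := inf_le_right
  have hWUr : W.relIndex U ≠ 0 := by
    intro h0
    have h1 := Subgroup.relIndex_mul_index hWU
    rw [h0, zero_mul] at h1
    exact hWfi.index_ne_zero h1.symm
  have hWVr : W.relIndex V ≠ 0 := by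
    intro h0
    have h1 := Subgroup.relIndex_mul_index hWV
    rw [h0, zero_mul] at h1
    exact hWfi.index_ne_zero h1.symm
  have hkn : k * U.index ≤ W.index := by
    calc k * U.index ≤ W.relIndex U * U.index :=
          Nat.mul_le_mul_right _ (Subgroup.relIndex_le_of_le_right hAU hWUr)
      _ = W.index := Subgroup.relIndex_mul_index hWU
  have hjm : j * V.index ≤ W.index := by
    calc j * V.index ≤ W.relIndex V * V.index :=
          Nat.mul_le_mul_right _ (Subgroup.relIndex_le_of_le_right hBV hWVr)
      _ = W.index := Subgroup.relIndex_mul_index hWV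
  obtain ⟨TA, hTAc, hTAcl⟩ := exists_finset_closure_inf A W hSA
  obtain ⟨TB, hTBc, hTBcl⟩ := exists_finset_closure_inf B W hSB
  set R : Subgroup G := Subgroup.closure ((TA ∪ TB : Finset G) : Set G) with hR
  have hRW : R ≤ W := by
    rw [hR]
    apply (Subgroup.closure_le _).mpr
    rw [Finset.coe_union]
    apply Set.union_subset
    · intro x hx
      have : x ∈ Subgroup.closure (TA : Set G) := Subgroup.subset_closure hx
      rw [hTAcl] at this
      exact this.1
    · intro x hx
      have : x ∈ Subgroup.closure (TB : Set G) := Subgroup.subset_closure hx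
      rw [hTBcl] at this
      exact this.1
  have hAWR : W ⊓ A ≤ R := by
    rw [← hTAcl, hR]
    exact Subgroup.closure_mono (by rw [Finset.coe_union]; exact Set.subset_union_left)
  have hBWR : W ⊓ B ≤ R := by
    rw [← hTBcl, hR]
    exact Subgroup.closure_mono (by rw [Finset.coe_union]; exact Set.subset_union_right)
  have hRrank : subgroupRank R ≤ k * SA.card + j * SB.card := by
    calc subgroupRank R ≤ (TA ∪ TB).card := subgroupRank_le_card hR.symm
      _ ≤ TA.card + TB.card := Finset.card_union_le _ _
      _ ≤ k * SA.card + j * SB.card := Nat.add_le_add hTAc hTBc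
  rcases eq_or_ne R.index 0 with hRi | hRi
  · have hRfg : R.FG := ⟨TA ∪ TB, hR.symm⟩
    obtain ⟨FA, hFAc, hFAcov⟩ := exists_cover_left A W hk0
    obtain ⟨FB, hFBc, hFBcov⟩ := exists_cover_right B W hj0
    have key : ∀ ε : ℝ, 0 < ε → ∃ q : FiniteQuotient G,
        (Set.ncard (q.φ '' ((A : Set G) * (B : Set G))) : ℝ) / (Fintype.card q.K : ℝ) < ε := by
      intro ε hε
      set N : ℕ := ⌈((k * j : ℕ) : ℝ) / ε⌉₊ + 1 with hN
      obtain ⟨P, hRP, hPfi, hPN⟩ := hlpf R hRfg hRi N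
      haveI := hPfi
      set M : Subgroup G := P.normalCore with hM
      haveI hMfi : M.FiniteIndex := P.finiteIndex_normalCore
      haveI : Finite (G ⧸ M) := Nat.finite_of_card_ne_zero hMfi.index_ne_zero
      haveI hfK : Fintype (G ⧸ M) := Fintype.ofFinite _
      set φ : G →* G ⧸ M := QuotientGroup.mk' M with hφ
      have hsurj : Function.Surjective φ := QuotientGroup.mk'_surjective M
      refine ⟨⟨G ⧸ M, φ, hsurj⟩, ?_⟩
      have hsub : (A : Set G) * (B : Set G) ⊆ ((FA : Set G) * (P : Set G)) * (FB : Set G) := by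
        rintro x ⟨a₁, ha₁, b₁, hb₁, rfl⟩
        obtain ⟨f, hf, w, hw, hfw⟩ := hFAcov ha₁
        obtain ⟨w', hw', f', hf', hfw'⟩ := hFBcov hb₁
        have hwP : w ∈ P := hRP (hAWR (SetLike.mem_coe.mp hw))
        have hw'P : w' ∈ P := hRP (hBWR (SetLike.mem_coe.mp hw'))
        refine ⟨f * (w * w'),
          ⟨f, hf, w * w', SetLike.mem_coe.mpr (mul_mem hwP hw'P), rfl⟩, f', hf', ?_⟩
        have hfw2 : f * w = a₁ := hfw
        have hfw2' : w' * f' = b₁ := hfw'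
        show f * (w * w') * f' = a₁ * b₁
        rw [← hfw2, ← hfw2']
        group
      have himg : φ '' ((A : Set G) * (B : Set G)) ⊆
          ((φ '' (FA : Set G)) * (φ '' (P : Set G))) * (φ '' (FB : Set G)) := by
        refine Set.Subset.trans (Set.image_mono hsub) ?_
        rw [Set.image_mul, Set.image_mul]
      have hA1 : Nat.card (φ '' (FA : Set G)) ≤ k := by
        rw [Nat.card_coe_set_eq]
        calc (φ '' (FA : Set G)).ncard ≤ (FA : Set G).ncard :=
              Set.ncard_image_le (Finset.finite_toSet _)
          _ = FA.card := Set.ncard_coe_finset _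
          _ ≤ k := hFAc
      have hB1 : Nat.card (φ '' (FB : Set G)) ≤ j := by
        rw [Nat.card_coe_set_eq]
        calc (φ '' (FB : Set G)).ncard ≤ (FB : Set G).ncard :=
              Set.ncard_image_le (Finset.finite_toSet _)
          _ = FB.card := Set.ncard_coe_finset _
          _ ≤ j := hFBc
      have hPimg : φ '' (P : Set G) = ((P.map φ : Subgroup (G ⧸ M)) : Set (G ⧸ M)) :=
        (Subgroup.coe_map _ _).symm
      have hQi : (P.map φ).index = P.index :=
        P.index_map_eq hsurj (by rw [hφ, QuotientGroup.ker_mk']; exact P.normalCore_le)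
      have hcard : Nat.card (P.map φ) * P.index = Nat.card (G ⧸ M) := by
        rw [← hQi]; exact Subgroup.card_mul_index _
      have hQpos : 0 < Nat.card (P.map φ) := Nat.card_pos
      have e1 : Nat.card (φ '' (P : Set G)) = Nat.card (P.map φ) := by
        rw [hPimg]; rfl
      have hmain : (φ '' ((A : Set G) * (B : Set G))).ncard ≤ k * Nat.card (P.map φ) * j := by
        calc (φ '' ((A : Set G) * (B : Set G))).ncard
            ≤ (((φ '' (FA : Set G)) * (φ '' (P : Set G))) * (φ '' (FB : Set G))).ncard :=
              Set.ncard_le_ncard himg (Set.toFinite _)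
          _ = Nat.card ((((φ '' (FA : Set G)) * (φ '' (P : Set G))) * (φ '' (FB : Set G)) :
              Set (G ⧸ M))) := (Nat.card_coe_set_eq _).symm
          _ ≤ Nat.card (((φ '' (FA : Set G)) * (φ '' (P : Set G)) : Set (G ⧸ M))) *
              Nat.card ((φ '' (FB : Set G) : Set (G ⧸ M))) := Set.natCard_mul_le
          _ ≤ Nat.card ((φ '' (FA : Set G) : Set (G ⧸ M))) *
              Nat.card ((φ '' (P : Set G) : Set (G ⧸ M))) *
              Nat.card ((φ '' (FB : Set G) : Set (G ⧸ M))) :=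
              Nat.mul_le_mul_right _ Set.natCard_mul_le
          _ ≤ k * Nat.card (P.map φ) * j := by
              rw [e1]
              exact Nat.mul_le_mul (Nat.mul_le_mul_right _ hA1) hB1
      have hPipos : (0 : ℝ) < (P.index : ℝ) := by
        exact_mod_cast Nat.pos_of_ne_zero hPfi.index_ne_zero
      have hQpos' : (0 : ℝ) < (Nat.card (P.map φ) : ℝ) := by exact_mod_cast hQpos
      have hKcard : (Fintype.card (G ⧸ M) : ℝ) = (Nat.card (P.map φ) : ℝ) * (P.index : ℝ) := by
        rw [← Nat.card_eq_fintype_card, ← hcard]; push_cast; ring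
      have hle : (Set.ncard (φ '' ((A : Set G) * (B : Set G))) : ℝ) /
          (Fintype.card (G ⧸ M) : ℝ) ≤ ((k : ℝ) * (j : ℝ)) / (P.index : ℝ) := by
        rw [hKcard, div_le_div_iff₀ (by positivity) hPipos]
        have hm' : (Set.ncard (φ '' ((A : Set G) * (B : Set G))) : ℝ) ≤
            (k : ℝ) * (Nat.card (P.map φ) : ℝ) * (j : ℝ) := by exact_mod_cast hmain
        nlinarith [hm', hPipos, hQpos']
      have hlast : ((k : ℝ) * (j : ℝ)) / (P.index : ℝ) < ε := by
        have hNle : (N : ℝ) ≤ (P.index : ℝ) := by exact_mod_cast hPN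
        have hNpos : (0 : ℝ) < (N : ℝ) := by
          rw [hN]; exact_mod_cast Nat.succ_pos _
        have h5 : ((k * j : ℕ) : ℝ) / ε < (N : ℝ) := by
          have h5a := Nat.le_ceil (((k * j : ℕ) : ℝ) / ε)
          have h6 : ((⌈((k * j : ℕ) : ℝ) / ε⌉₊ : ℝ)) < (N : ℝ) := by
            rw [hN]; exact_mod_cast Nat.lt_succ_self _
          linarith
        rw [div_lt_iff₀ hPipos]
        have h8 : ((k * j : ℕ) : ℝ) < (N : ℝ) * ε := (div_lt_iff₀ hε).mp h5
        have h9 : (N : ℝ) * ε ≤ (P.index : ℝ) * ε :=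
          mul_le_mul_of_nonneg_right hNle (le_of_lt hε)
        have h10 : ((k * j : ℕ) : ℝ) = (k : ℝ) * (j : ℝ) := by push_cast; ring
        rw [← h10]
        linarith [h8, h9]
      exact lt_of_le_of_lt hle hlast
    have lb : ∀ r ∈ {r : ℝ | ∃ q : FiniteQuotient G,
        r = (Set.ncard (q.φ '' ((A : Set G) * (B : Set G))) : ℝ) / (Fintype.card q.K : ℝ)},
        0 ≤ r := by
      rintro r ⟨q, rfl⟩
      positivity
    obtain ⟨q1, hq1⟩ := key 1 one_pos
    unfold profiniteMeasure
    refine le_antisymm ?_ (le_csInf ⟨_, ⟨q1, rfl⟩⟩ lb)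
    by_contra hlt
    push_neg at hlt
    obtain ⟨q2, hq2⟩ := key _ hlt
    exact absurd (csInf_le ⟨0, lb⟩ ⟨q2, rfl⟩) (not_le.mpr hq2)
  · exfalso
    haveI hRfi : R.FiniteIndex := ⟨hRi⟩
    have h1 := rankGradient_le_aux R hRfi
    have hWind : W.index ≤ R.index :=
      Nat.le_of_dvd (Nat.pos_of_ne_zero hRi) (Subgroup.index_dvd_of_le hRW)
    have hRpos : (0 : ℝ) < (R.index : ℝ) := by
      exact_mod_cast Nat.pos_of_ne_zero hRi
    have hWpos : (0 : ℝ) < (W.index : ℝ) := by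
      exact_mod_cast Nat.pos_of_ne_zero hWfi.index_ne_zero
    rw [le_div_iff₀ hRpos] at h1
    have h2 : (subgroupRank R : ℝ) ≤ (k : ℝ) * SA.card + (j : ℝ) * SB.card := by
      exact_mod_cast hRrank
    have hn₀' : (0 : ℝ) < (n₀ : ℝ) := by exact_mod_cast hn₀pos
    have hk' : (k : ℝ) * n₀ ≤ (W.index : ℝ) := by
      have : (k : ℝ) * n₀ ≤ (k : ℝ) * U.index := by
        apply mul_le_mul_of_nonneg_left _ (Nat.cast_nonneg k)
        exact_mod_cast hUn
      refine le_trans this ?_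
      exact_mod_cast hkn
    have hj' : (j : ℝ) * n₀ ≤ (W.index : ℝ) := by
      have : (j : ℝ) * n₀ ≤ (j : ℝ) * V.index := by
        apply mul_le_mul_of_nonneg_left _ (Nat.cast_nonneg j)
        exact_mod_cast hVm
      refine le_trans this ?_
      exact_mod_cast hjm
    have hkc : (k : ℝ) ≤ (W.index : ℝ) / (n₀ : ℝ) := by
      rw [le_div_iff₀ hn₀']; exact hk'
    have hjc : (j : ℝ) ≤ (W.index : ℝ) / (n₀ : ℝ) := by
      rw [le_div_iff₀ hn₀']; exact hj'
    have t1 : rankGradient G * (W.index : ℝ) ≤ rankGradient G * (R.index : ℝ) :=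
      mul_le_mul_of_nonneg_left (by exact_mod_cast hWind) (le_of_lt hrg)
    have t5 : (k : ℝ) * SA.card ≤ ((W.index : ℝ) / (n₀ : ℝ)) * SA.card :=
      mul_le_mul_of_nonneg_right hkc (Nat.cast_nonneg _)
    have t6 : (j : ℝ) * SB.card ≤ ((W.index : ℝ) / (n₀ : ℝ)) * SB.card :=
      mul_le_mul_of_nonneg_right hjc (Nat.cast_nonneg _)
    have t7 : ((W.index : ℝ) / (n₀ : ℝ)) * SA.card + ((W.index : ℝ) / (n₀ : ℝ)) * SB.card
        = (W.index : ℝ) * ((ab : ℝ) / (n₀ : ℝ)) := by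
      rw [hab]; push_cast; ring
    have t8 : (W.index : ℝ) * ((ab : ℝ) / (n₀ : ℝ)) < (W.index : ℝ) * rankGradient G :=
      mul_lt_mul_of_pos_left hthresh hWpos
    nlinarith [t1, h1, h2, t5, t6, t7, t8]
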